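/- Two commutative rings A and B are both TAF-rings if and only if their direct product A × B is a TAF-ring. -/

import Mathlib

/-- An ideal is 2-absorbing if whenever a product of three elements lies in it,
the product of some two of them lies in it. -/
def IsTwoAbsorbing {R : Type*} [CommRing R] (I : Ideal R) : Prop :=
  ∀ a b c : R, a * b * c ∈ I → a * b ∈ I ∨ a * c ∈ I ∨ b * c ∈ I

/-- A TAF-ring: every proper ideal is a finite product of proper 2-absorbing ideals. -/
def IsTAFRing (R : Type*) [CommRing R] : Prop :=
  ∀ I : Ideal R, I ≠ ⊤ → ∃ (n : ℕ) (J : Fin n → Ideal R),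
    (∀ i, J i ≠ ⊤ ∧ IsTwoAbsorbing (J i)) ∧ I = ∏ i, J i

section Aux

variable {A B : Type*} [CommRing A] [CommRing B]

lemma prod_mul_prod' (I I' : Ideal A) (J J' : Ideal B) :
    (Ideal.prod I J) * (Ideal.prod I' J') = Ideal.prod (I * I') (J * J') := by
  apply le_antisymm
  · rw [Ideal.mul_le]
    rintro ⟨a, b⟩ ⟨ha, hb⟩ ⟨a', b'⟩ ⟨ha', hb'⟩
    exact ⟨Ideal.mul_mem_mul ha ha', Ideal.mul_mem_mul hb hb'⟩
  · rintro ⟨a, b⟩ ⟨ha, hb⟩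
    have ha' : a ∈ I * I' := ha
    have hb' : b ∈ J * J' := hb
    have h1 : ((a, 0) : A × B) ∈ Ideal.prod I J * Ideal.prod I' J' := by
      refine Submodule.mul_induction_on ha' (fun x hx y hy => ?_) (fun x y hx hy => ?_)
      · have : ((x * y, 0) : A × B) = (x, (0:B)) * (y, (0:B)) := by simp
        rw [this]
        exact Ideal.mul_mem_mul ⟨hx, zero_mem J⟩ ⟨hy, zero_mem J'⟩
      · have : ((x + y, 0) : A × B) = (x, (0:B)) + (y, (0:B)) := by simp
        rw [this]; exact add_mem hx hy
    have h2 : ((0, b) : A × B) ∈ Ideal.prod I J * Ideal.prod I' J' := by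
      refine Submodule.mul_induction_on hb' (fun x hx y hy => ?_) (fun x y hx hy => ?_)
      · have : (((0:A), x * y) : A × B) = ((0:A), x) * ((0:A), y) := by simp
        rw [this]
        exact Ideal.mul_mem_mul ⟨zero_mem I, hx⟩ ⟨zero_mem I', hy⟩
      · have : (((0:A), x + y) : A × B) = ((0:A), x) + ((0:A), y) := by simp
        rw [this]; exact add_mem hx hy
    have : ((a, b) : A × B) = (a, 0) + (0, b) := by simp
    rw [this]; exact add_mem h1 h2

lemma prod_finset_prod {n : ℕ} (f : Fin n → Ideal A) (g : Fin n → Ideal B) :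
    ∏ i, Ideal.prod (f i) (g i) = Ideal.prod (∏ i, f i) (∏ i, g i) := by
  induction n with
  | zero => simp [Ideal.one_eq_top]
  | succ m ih =>
      rw [Fin.prod_univ_succ, Fin.prod_univ_succ, Fin.prod_univ_succ, ih, prod_mul_prod']

lemma prod_eq_top_iff' {I : Ideal A} {J : Ideal B} :
    Ideal.prod I J = ⊤ ↔ I = ⊤ ∧ J = ⊤ := by
  rw [← Ideal.prod_top_top, Ideal.prod_inj]

end Aux

theorem TAF_prod_iff {A B : Type*} [CommRing A] [CommRing B] :
    (IsTAFRing A ∧ IsTAFRing B) ↔ IsTAFRing (A × B) := by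
  constructor
  · rintro ⟨hA, hB⟩ I hI
    have hEq := Ideal.ideal_prod_eq I
    set I₁ := Ideal.map (RingHom.fst A B) I with hI₁
    set I₂ := Ideal.map (RingHom.snd A B) I with hI₂
    have h1 : ∃ (n : ℕ) (J : Fin n → Ideal A),
        (∀ i, J i ≠ ⊤ ∧ IsTwoAbsorbing (J i)) ∧ I₁ = ∏ i, J i := by
      by_cases h : I₁ = ⊤
      · exact ⟨0, Fin.elim0, fun i => i.elim0, by simp [h, Ideal.one_eq_top]⟩
      · exact hA I₁ h
    have h2 : ∃ (n : ℕ) (J : Fin n → Ideal B),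
        (∀ i, J i ≠ ⊤ ∧ IsTwoAbsorbing (J i)) ∧ I₂ = ∏ i, J i := by
      by_cases h : I₂ = ⊤
      · exact ⟨0, Fin.elim0, fun i => i.elim0, by simp [h, Ideal.one_eq_top]⟩
      · exact hB I₂ h
    obtain ⟨n, J, hJ, hJeq⟩ := h1
    obtain ⟨m, K, hK, hKeq⟩ := h2
    refine ⟨n + m, Fin.append (fun i => Ideal.prod (J i) ⊤) (fun j => Ideal.prod ⊤ (K j)),
      ?_, ?_⟩
    · intro i
      refine Fin.addCases (fun i => ?_) (fun j => ?_) i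
      · rw [Fin.append_left]
        refine ⟨fun h => (hJ i).1 (prod_eq_top_iff'.mp h).1, ?_⟩
        intro a b c h
        rcases (hJ i).2 a.1 b.1 c.1 h.1 with h' | h' | h'
        · exact Or.inl ⟨h', trivial⟩
        · exact Or.inr (Or.inl ⟨h', trivial⟩)
        · exact Or.inr (Or.inr ⟨h', trivial⟩)
      · rw [Fin.append_right]
        refine ⟨fun h => (hK j).1 (prod_eq_top_iff'.mp h).2, ?_⟩
        intro a b c h
        rcases (hK j).2 a.2 b.2 c.2 h.2 with h' | h' | h'
        · exact Or.inl ⟨trivial, h'⟩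
        · exact Or.inr (Or.inl ⟨trivial, h'⟩)
        · exact Or.inr (Or.inr ⟨trivial, h'⟩)
    · rw [Fin.prod_univ_add]
      simp only [Fin.append_left, Fin.append_right]
      have e1 : ∏ i : Fin n, Ideal.prod (J i) (⊤ : Ideal B)
          = Ideal.prod (∏ i, J i) ⊤ := by
        rw [prod_finset_prod]; congr 1; simp [Ideal.one_eq_top, Ideal.top_pow]
      have e2 : ∏ j : Fin m, Ideal.prod (⊤ : Ideal A) (K j)
          = Ideal.prod ⊤ (∏ j, K j) := by
        rw [prod_finset_prod]; congr 1; simp [Ideal.one_eq_top, Ideal.top_pow]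
      rw [e1, e2, prod_mul_prod', Ideal.mul_top, Ideal.top_mul, ← hJeq, ← hKeq, ← hEq]
  · intro h
    constructor
    · intro I hI
      have hproper : Ideal.prod I (⊤ : Ideal B) ≠ ⊤ := by
        simp only [ne_eq, prod_eq_top_iff']; tauto
      obtain ⟨n, L, hL, hLeq⟩ := h _ hproper
      set Jf := fun i => Ideal.map (RingHom.fst A B) (L i) with hJf
      set Kf := fun i => Ideal.map (RingHom.snd A B) (L i) with hKf
      have hLi : ∀ i, L i = Ideal.prod (Jf i) (Kf i) := fun i => Ideal.ideal_prod_eq _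
      have key : Ideal.prod I (⊤ : Ideal B) = Ideal.prod (∏ i, Jf i) (∏ i, Kf i) := by
        rw [hLeq, Finset.prod_congr rfl (fun i _ => hLi i), prod_finset_prod]
      obtain ⟨hIeq, hTeq⟩ := Ideal.prod_inj.mp key
      have hKtop : ∀ i, Kf i = ⊤ := fun i =>
        eq_top_iff.mpr (hTeq ▸ (Ideal.prod_le_inf.trans (Finset.inf_le (Finset.mem_univ i))))
      refine ⟨n, Jf, fun i => ⟨?_, ?_⟩, hIeq⟩
      · intro hJtop
        exact (hL i).1 (by rw [hLi i, hJtop, hKtop i, Ideal.prod_top_top])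
      · intro a b c habc
        have hm : ((a, 1) : A × B) * (b, 1) * (c, 1) ∈ L i := by
          rw [hLi i]
          exact ⟨habc, by rw [hKtop i]; trivial⟩
        rcases (hL i).2 _ _ _ hm with h' | h' | h' <;> rw [hLi i] at h'
        · exact Or.inl h'.1
        · exact Or.inr (Or.inl h'.1)
        · exact Or.inr (Or.inr h'.1)
    · intro I hI
      have hproper : Ideal.prod (⊤ : Ideal A) I ≠ ⊤ := by
        simp only [ne_eq, prod_eq_top_iff']; tauto
      obtain ⟨n, L, hL, hLeq⟩ := h _ hproper
      set Jf := fun i => Ideal.map (RingHom.fst A B) (L i) with hJf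
      set Kf := fun i => Ideal.map (RingHom.snd A B) (L i) with hKf
      have hLi : ∀ i, L i = Ideal.prod (Jf i) (Kf i) := fun i => Ideal.ideal_prod_eq _
      have key : Ideal.prod (⊤ : Ideal A) I = Ideal.prod (∏ i, Jf i) (∏ i, Kf i) := by
        rw [hLeq, Finset.prod_congr rfl (fun i _ => hLi i), prod_finset_prod]
      obtain ⟨hTeq, hIeq⟩ := Ideal.prod_inj.mp key
      have hJtop : ∀ i, Jf i = ⊤ := fun i =>
        eq_top_iff.mpr (hTeq ▸ (Ideal.prod_le_inf.trans (Finset.inf_le (Finset.mem_univ i))))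
      refine ⟨n, Kf, fun i => ⟨?_, ?_⟩, hIeq⟩
      · intro hKtop
        exact (hL i).1 (by rw [hLi i, hKtop, hJtop i, Ideal.prod_top_top])
      · intro a b c habc
        have hm : ((1, a) : A × B) * (1, b) * (1, c) ∈ L i := by
          rw [hLi i]
          exact ⟨by rw [hJtop i]; trivial, habc⟩
        rcases (hL i).2 _ _ _ hm with h' | h' | h' <;> rw [hLi i] at h'
        · exact Or.inl h'.2
        · exact Or.inr (Or.inl h'.2)
        · exact Or.inr (Or.inr h'.2)
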